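/- Let M be a divisibility monoid and let a, b be elements of M admitting local deltas. Then a ∨ b exists and admits a local delta, and Δ_R(a ∨ b) = Δ_R(a) ∨ Δ_R(b). -/

import Mathlib

/-- `LDvd b a` : `b` left-divides `a`, i.e. `a = b * d` for some `d`. -/
def LDvd {M : Type*} [Monoid M] (b a : M) : Prop := ∃ d, a = b * d

/-- `c` is a right lcm of `a` and `b`. -/
def IsRightLcm {M : Type*} [Monoid M] (a b c : M) : Prop :=
  LDvd a c ∧ LDvd b c ∧ ∀ m, LDvd a m → LDvd b m → LDvd c m

/-- `1` is the only invertible element. -/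
def Conical (M : Type*) [Monoid M] : Prop := ∀ u : M, IsUnit u → u = 1

/-- Left and right cancellativity. -/
def Cancellative (M : Type*) [Monoid M] : Prop :=
  (∀ a b c : M, a * b = a * c → b = c) ∧ (∀ a b c : M, b * a = c * a → b = c)

/-- `IsRes a b r` : `r` is the residue `a \ b`, i.e. `a * r` is the right lcm `a ∨ b`. -/
def IsRes {M : Type*} [Monoid M] (a b r : M) : Prop := IsRightLcm a b (a * r)

/-- The set of irreducible elements of `M`. -/
def Irr (M : Type*) [Monoid M] : Set M :=
  {a | a ≠ 1 ∧ ∀ b c : M, a = b * c → b = 1 ∨ c = 1}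

/-- `a` is quasi-central: `aΣ = Σa` where `Σ` is the set of irreducible elements. -/
def QuasiCentral {M : Type*} [Monoid M] (a : M) : Prop :=
  (fun x => a * x) '' Irr M = (fun x => x * a) '' Irr M

/-- `g` is a left gcd of `a` and `b`. -/
def IsLeftGcd {M : Type*} [Monoid M] (a b g : M) : Prop :=
  LDvd g a ∧ LDvd g b ∧ ∀ d, LDvd d a → LDvd d b → LDvd d g

/-- `j` is the join of `x` and `y` inside the lattice `↓(a)` of left divisors of `a`. -/
def IsJoinIn {M : Type*} [Monoid M] (a x y j : M) : Prop :=
  LDvd j a ∧ LDvd x j ∧ LDvd y j ∧ ∀ m, LDvd m a → LDvd x m → LDvd y m → LDvd j m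

/-- A (left) divisibility monoid : cancellative, finitely generated by its irreducible
elements, any two elements admit a left gcd, and every `↓(a)` is a finite distributive
lattice under left divisibility (meets are left gcds, joins exist, distributivity holds). -/
structure IsDivisibilityMonoid (M : Type*) [Monoid M] : Prop where
  mul_left_cancel : ∀ a b c : M, a * b = a * c → b = c
  mul_right_cancel : ∀ a b c : M, b * a = c * a → b = c
  irr_finite : (Irr M).Finite
  irr_gen : ∀ a : M, a ∈ Submonoid.closure (Irr M)
  exists_gcd : ∀ a b : M, ∃ g, IsLeftGcd a b g
  divisors_finite : ∀ a : M, {b : M | LDvd b a}.Finite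
  exists_join : ∀ a x y : M, LDvd x a → LDvd y a → ∃ j, IsJoinIn a x y j
  distrib : ∀ a x y z : M, LDvd x a → LDvd y a → LDvd z a →
    ∀ jyz g gxy gxz j', IsJoinIn a y z jyz → IsLeftGcd x jyz g →
      IsLeftGcd x y gxy → IsLeftGcd x z gxz → IsJoinIn a gxy gxz j' → g = j'

/-- `d` is the (right) local delta of `a`: the right lcm of the set `{b \ a : b ∈ M}`,
all of whose elements are required to exist. -/
def IsLocalDelta {M : Type*} [Monoid M] (a d : M) : Prop :=
  (∀ b : M, ∃ r, IsRes b a r) ∧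
  (∀ b r : M, IsRes b a r → LDvd r d) ∧
  ∀ m : M, (∀ b r : M, IsRes b a r → LDvd r m) → LDvd d m

namespace Stmt18Aux

variable {M : Type*} [Monoid M]

theorem ldvd_refl (a : M) : LDvd a a := ⟨1, (mul_one a).symm⟩

theorem ldvd_trans {a b c : M} : LDvd a b → LDvd b c → LDvd a c
  | ⟨d, hd⟩, ⟨e, he⟩ => ⟨d * e, by rw [he, hd, mul_assoc]⟩

theorem ldvd_mul (a d : M) : LDvd a (a * d) := ⟨d, rfl⟩

theorem one_ldvd (a : M) : LDvd 1 a := ⟨a, (one_mul a).symm⟩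

theorem lcm_comm {a b c : M} (h : IsRightLcm a b c) : IsRightLcm b a c :=
  ⟨h.2.1, h.1, fun m h1 h2 => h.2.2 m h2 h1⟩

/-- `lcm c j = (lcm c a) ∨ b` when `j = a ∨ b`. -/
theorem lcm_absorb {c a b L₁ T j : M} (h1 : IsRightLcm c a L₁)
    (h2 : IsRightLcm L₁ b T) (hj : IsRightLcm a b j) : IsRightLcm c j T := by
  refine ⟨ldvd_trans h1.1 h2.1, ?_, ?_⟩
  · exact hj.2.2 T (ldvd_trans h1.2.1 h2.1) h2.2.1
  · intro m hcm hjm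
    exact h2.2.2 m (h1.2.2 m hcm (ldvd_trans hj.1 hjm)) (ldvd_trans hj.2.1 hjm)

/-- Cancel left multiplication from an lcm statement. -/
theorem lcm_cancel (lc : ∀ a b c : M, a * b = a * c → b = c)
    {c x y L : M} (h : IsRightLcm (c * x) (c * y) (c * L)) : IsRightLcm x y L := by
  obtain ⟨⟨u, hu⟩, ⟨v, hv⟩, hmin⟩ := h
  refine ⟨⟨u, lc c _ _ (by rw [← mul_assoc]; exact hu)⟩,
    ⟨v, lc c _ _ (by rw [← mul_assoc]; exact hv)⟩, ?_⟩
  rintro m ⟨p, hp⟩ ⟨q, hq⟩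
  obtain ⟨t, ht⟩ := hmin (c * m) ⟨p, by rw [hp, mul_assoc]⟩ ⟨q, by rw [hq, mul_assoc]⟩
  exact ⟨t, lc c _ _ (by rw [ht, mul_assoc])⟩

/-- Residues of `a` have lcms with everything, provided `a` does. -/
theorem res_P (lc : ∀ a b c : M, a * b = a * c → b = c)
    {a : M} (ha : ∀ x : M, ∃ r, IsRightLcm x a (x * r))
    {c₁ s : M} (h : IsRightLcm c₁ a (c₁ * s)) (c : M) :
    ∃ L, IsRightLcm c s L := by
  obtain ⟨v, hv⟩ := ha (c₁ * c)
  have hc₁ : LDvd c₁ (c₁ * c * v) := ⟨c * v, by rw [mul_assoc]⟩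
  obtain ⟨u, hu⟩ := h.2.2 _ hc₁ hv.2.1
  have key : c * v = s * u := lc c₁ _ _ (by rw [← mul_assoc, ← mul_assoc]; exact hu)
  refine ⟨c * v, ⟨v, rfl⟩, ⟨u, key⟩, ?_⟩
  rintro m ⟨p, hp⟩ ⟨q, hq⟩
  have h1 : LDvd (c₁ * c) (c₁ * m) := ⟨p, by rw [hp, mul_assoc]⟩
  have h2 : LDvd a (c₁ * m) := ldvd_trans h.2.1 ⟨q, by rw [hq, mul_assoc]⟩
  obtain ⟨t, ht⟩ := hv.2.2 _ h1 h2
  exact ⟨t, lc c₁ _ _ (by rw [ht, mul_assoc, mul_assoc, mul_assoc])⟩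

/-- lcm-with-everything is preserved by lcm. -/
theorem P_lcm {p q s : M} (hp : ∀ c, ∃ L, IsRightLcm c p L)
    (hq : ∀ c, ∃ L, IsRightLcm c q L) (hs : IsRightLcm p q s) :
    ∀ c, ∃ L, IsRightLcm c s L := fun c => by
  obtain ⟨L₁, h1⟩ := hp c
  obtain ⟨T, h2⟩ := hq L₁
  exact ⟨T, lcm_absorb h1 h2 hs⟩

/-- A finite set of elements with a common right multiple has a global right lcm. -/
theorem joinFin (hM : IsDivisibilityMonoid M) {S : Set M} (hS : S.Finite) :
    ∀ A : M, (∀ s ∈ S, LDvd s A) →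
      ∃ d, LDvd d A ∧ (∀ s ∈ S, LDvd s d) ∧ ∀ m, (∀ s ∈ S, LDvd s m) → LDvd d m := by
  refine Set.Finite.induction_on S hS ?_ ?_
  · intro A _
    exact ⟨1, one_ldvd A, fun s hs => absurd hs (Set.notMem_empty s),
      fun m _ => one_ldvd m⟩
  · intro x S' _ _ IH A hA
    obtain ⟨d', hd'A, hd's, hd'min⟩ := IH A (fun s hs => hA s (Set.mem_insert_of_mem _ hs))
    obtain ⟨jj, hjj⟩ := hM.exists_join A x d' (hA x (Set.mem_insert x S')) hd'A
    refine ⟨jj, hjj.1, ?_, ?_⟩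
    · intro s hs
      rcases hs with rfl | hs
      · exact hjj.2.1
      · exact ldvd_trans (hd's s hs) hjj.2.2.1
    · intro m hm
      obtain ⟨g, hg⟩ := hM.exists_gcd m A
      have hxg : LDvd x g := hg.2.2 x (hm x (Set.mem_insert x S')) (hA x (Set.mem_insert x S'))
      have hd'm : LDvd d' m := hd'min m (fun s hs => hm s (Set.mem_insert_of_mem _ hs))
      have hd'g : LDvd d' g := hg.2.2 d' hd'm hd'A
      exact ldvd_trans (hjj.2.2.2 g hg.2.1 hxg hd'g) hg.1

/-- If `d` is a global lcm of a finite set of elements which each have lcms with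
everything, then so does `d`. -/
theorem glcm_P (hM : IsDivisibilityMonoid M) {S : Set M} (hS : S.Finite) :
    ∀ d : M, (∀ s ∈ S, LDvd s d) → (∀ m, (∀ s ∈ S, LDvd s m) → LDvd d m) →
      (∀ s ∈ S, ∀ c, ∃ L, IsRightLcm c s L) → ∀ c, ∃ L, IsRightLcm c d L := by
  refine Set.Finite.induction_on S hS ?_ ?_
  · intro d _ hmin _ c
    exact ⟨c, ldvd_refl c,
      ldvd_trans (hmin c (fun s hs => absurd hs (Set.notMem_empty s))) (ldvd_refl c),
      fun m h _ => h⟩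
  · intro x S' _ hS' IH d hub hmin hP
    obtain ⟨d'', _, hub'', hmin''⟩ := joinFin hM hS' d
      (fun s hs => hub s (Set.mem_insert_of_mem _ hs))
    have Pd'' : ∀ c, ∃ L, IsRightLcm c d'' L :=
      IH d'' hub'' hmin'' (fun s hs => hP s (Set.mem_insert_of_mem _ hs))
    have Px : ∀ c, ∃ L, IsRightLcm c x L := hP x (Set.mem_insert x S')
    obtain ⟨L, hL⟩ := Px d''
    have PL : ∀ c, ∃ L₂, IsRightLcm c L L₂ := P_lcm Pd'' Px hL
    have hdL : LDvd d L := by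
      refine hmin L ?_
      intro s hs
      rcases hs with rfl | hs
      · exact hL.2.1
      · exact ldvd_trans (hub'' s hs) hL.1
    have hLd : LDvd L d :=
      hL.2.2 d (hmin'' d (fun s hs => hub s (Set.mem_insert_of_mem _ hs)))
        (hub x (Set.mem_insert x S'))
    intro c
    obtain ⟨L₂, hL₂⟩ := PL c
    exact ⟨L₂, hL₂.1, ldvd_trans hdL hL₂.2.1,
      fun m hcm hdm => hL₂.2.2 m hcm (ldvd_trans hLd hdm)⟩

end Stmt18Aux

open Stmt18Aux in
theorem stmt18 {M : Type*} [Monoid M] (hM : IsDivisibilityMonoid M)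
    (a b da db : M) (hda : IsLocalDelta a da) (hdb : IsLocalDelta b db) :
    ∃ j dj : M, IsRightLcm a b j ∧ IsLocalDelta j dj ∧ IsRightLcm da db dj := by
  have lc := hM.mul_left_cancel
  -- `j := a ∨ b` exists.
  obtain ⟨r0, hr0⟩ := hda.1 b
  set j := b * r0 with hjdef
  have hj : IsRightLcm a b j := lcm_comm hr0
  -- `da` has lcms with everything.
  have Pda : ∀ c, ∃ L, IsRightLcm c da L := by
    have hfin : ({r : M | ∃ c, IsRightLcm c a (c * r)}).Finite :=
      Set.Finite.subset (hM.divisors_finite da)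
        (fun r ⟨c, h⟩ => hda.2.1 c r h)
    exact glcm_P hM hfin da (fun s ⟨c, h⟩ => hda.2.1 c s h)
      (fun m h => hda.2.2 m (fun x r hr => h r ⟨x, hr⟩))
      (fun s ⟨c₁, h⟩ => res_P lc hda.1 h)
  -- `dj := da ∨ db` exists.
  obtain ⟨dj, hdj0⟩ := Pda db
  have hdj : IsRightLcm da db dj := lcm_comm hdj0
  -- construction of residues of j: if r' is a residue of a' by c, and j' = a' ∨ b',
  -- then r' * ((c*r') \ b') is a residue of j' by c.
  have mk : ∀ (a' b' j' : M), IsRightLcm a' b' j' →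
      (∀ c : M, ∃ r, IsRightLcm c b' (c * r)) →
      ∀ c r', IsRightLcm c a' (c * r') →
        ∃ w, IsRightLcm (c * r') b' (c * r' * w) ∧ IsRightLcm c j' (c * (r' * w)) := by
    intro a' b' j' hj' hb' c r' h1
    obtain ⟨w, hw⟩ := hb' (c * r')
    refine ⟨w, hw, ?_⟩
    rw [← mul_assoc]
    exact lcm_absorb h1 hw hj'
  refine ⟨j, dj, hj, ⟨?_, ?_, ?_⟩, hdj⟩
  · -- all residues of j exist
    intro c
    obtain ⟨r', h1⟩ := hda.1 c
    obtain ⟨w, _, h⟩ := mk a b j hj hdb.1 c r' h1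
    exact ⟨r' * w, h⟩
  · -- all residues of j divide dj
    intro c r hr
    obtain ⟨r', h1⟩ := hda.1 c
    obtain ⟨w, hw, hcj⟩ := mk a b j hj hdb.1 c r' h1
    have h5 : LDvd (c * r) (c * (r' * w)) := hr.2.2 _ hcj.1 hcj.2.1
    have h6 : LDvd r (r' * w) := by
      obtain ⟨t, ht⟩ := h5
      exact ⟨t, lc c _ _ (by rw [ht, mul_assoc])⟩
    obtain ⟨r₂, h2⟩ := hdb.1 c
    -- c*(r'*w) is the lcm of c*r' and c*r₂
    have pair : IsRightLcm (c * r') (c * r₂) (c * (r' * w)) := by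
      rw [← mul_assoc]
      refine ⟨ldvd_mul _ _, ?_, ?_⟩
      · exact h2.2.2 _ (ldvd_trans (ldvd_mul c r') (ldvd_mul _ _)) hw.2.1
      · intro m hm1 hm2
        exact hw.2.2 m hm1 (ldvd_trans h2.2.1 hm2)
    have hred : IsRightLcm r' r₂ (r' * w) := lcm_cancel lc pair
    have h7 : LDvd (r' * w) dj :=
      hred.2.2 dj (ldvd_trans (hda.2.1 c r' h1) hdj.1)
        (ldvd_trans (hdb.2.1 c r₂ h2) hdj.2.1)
    exact ldvd_trans h6 h7
  · -- dj is least among common bounds of the residues of j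
    intro m hm
    refine hdj.2.2 m ?_ ?_
    · refine hda.2.2 m ?_
      intro c r' h1
      obtain ⟨w, _, hcj⟩ := mk a b j hj hdb.1 c r' h1
      exact ldvd_trans (ldvd_mul r' w) (hm c (r' * w) hcj)
    · refine hdb.2.2 m ?_
      intro c r₂ h2
      obtain ⟨w, _, hcj⟩ := mk b a j (lcm_comm hj) hda.1 c r₂ h2
      exact ldvd_trans (ldvd_mul r₂ w) (hm c (r₂ * w) hcj)
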